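/- Let $A = \sum_{j=1}^m y_j A_j$ where each $A_j$ is an $n$-qubit operator and $y_j > 0$. Suppose each $U_j$ is a unitary satisfying $\|A_j/\alpha_j - (\langle 0|^{\otimes a} \otimes I) U_j (|0\rangle^{\otimes a} \otimes I)\| \le \epsilon$ for some $\alpha_j > 0$. Let $B$ be a $b$-qubit unitary with $B|0\rangle = \sum_{j} \sqrt{\alpha_j y_j / s} |j\rangle$ where $s = \sum_j y_j \alpha_j$, and define $W = \sum_{j} |j\rangle\langle j| \otimes U_j + (I - \sum_j |j\rangle\langle j|) \otimes I$ and $\widetilde{W} = (B^\dagger \otimes I) W (B \otimes I)$. Then $\|A - s (\langle 0|^{\otimes b} \langle 0|^{\otimes a} \otimes I) \widetilde{W} (|0\rangle^{\otimes b} |0\rangle^{\otimes a} \otimes I)\| \le s \epsilon$, i.e., $\widetilde{W}$ is an $(s, a+b, s\epsilon)$-block-encoding of $A$. -/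

import Mathlib

open Matrix
open scoped Kronecker

set_option maxHeartbeats 1600000
set_option synthInstance.maxHeartbeats 400000

noncomputable section

/-- The spectral (ℓ²-operator) norm of a square complex matrix. -/
def specNorm {n : Type*} [Fintype n] [DecidableEq n] (A : Matrix n n ℂ) : ℝ :=
  ‖Matrix.toEuclideanCLM (𝕜 := ℂ) A‖

/-- Linear combination of block-encodings (generalized Lemma 52 of GSLW19):
given `(αⱼ, a, ε)`-block-encodings `Uⱼ` of `Aⱼ`, a state-preparation unitary `B` with
`B|0⟩ = ∑ⱼ √(αⱼyⱼ/s)|j⟩` where `s = ∑ⱼ yⱼαⱼ`, the unitary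
`W̃ = (B† ⊗ I) W (B ⊗ I)` with `W = ∑ⱼ |j⟩⟨j| ⊗ Uⱼ + (I - ∑ⱼ|j⟩⟨j|) ⊗ I`
is an `(s, a+b, sε)`-block-encoding of `A = ∑ⱼ yⱼ Aⱼ`. -/
theorem sum_block_encoding {n a b m : ℕ} (hm : m ≤ 2 ^ b)
    (y α : Fin m → ℝ) (hy : ∀ j, 0 < y j) (hα : ∀ j, 0 < α j) (ε : ℝ)
    (A : Fin m → Matrix (Fin (2 ^ n)) (Fin (2 ^ n)) ℂ)
    (U : Fin m → Matrix (Fin (2 ^ a) × Fin (2 ^ n)) (Fin (2 ^ a) × Fin (2 ^ n)) ℂ)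
    (hU : ∀ j, U j ∈ Matrix.unitaryGroup (Fin (2 ^ a) × Fin (2 ^ n)) ℂ)
    (hbe : ∀ j, specNorm ((((α j)⁻¹ : ℝ) : ℂ) • A j -
      Matrix.of fun p q : Fin (2 ^ n) =>
        U j (⟨0, Nat.two_pow_pos a⟩, p) (⟨0, Nat.two_pow_pos a⟩, q)) ≤ ε)
    (s : ℝ) (hs : s = ∑ j, y j * α j)
    (B : Matrix (Fin (2 ^ b)) (Fin (2 ^ b)) ℂ)
    (hB : B ∈ Matrix.unitaryGroup (Fin (2 ^ b)) ℂ)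
    (hB0 : ∀ j : Fin m,
      B (Fin.castLE hm j) ⟨0, Nat.two_pow_pos b⟩ = (Real.sqrt (α j * y j / s) : ℂ))
    (hB0' : ∀ i : Fin (2 ^ b), (∀ j : Fin m, Fin.castLE hm j ≠ i) →
      B i ⟨0, Nat.two_pow_pos b⟩ = 0)
    (W : Matrix (Fin (2 ^ b) × Fin (2 ^ a) × Fin (2 ^ n))
      (Fin (2 ^ b) × Fin (2 ^ a) × Fin (2 ^ n)) ℂ)
    (hW : W = (∑ j : Fin m,
        (Matrix.single (Fin.castLE hm j) (Fin.castLE hm j) (1 : ℂ)) ⊗ₖ U j) +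
      ((1 : Matrix (Fin (2 ^ b)) (Fin (2 ^ b)) ℂ) -
        ∑ j : Fin m, Matrix.single (Fin.castLE hm j) (Fin.castLE hm j) (1 : ℂ)) ⊗ₖ
        (1 : Matrix (Fin (2 ^ a) × Fin (2 ^ n)) (Fin (2 ^ a) × Fin (2 ^ n)) ℂ))
    (Wt : Matrix (Fin (2 ^ b) × Fin (2 ^ a) × Fin (2 ^ n))
      (Fin (2 ^ b) × Fin (2 ^ a) × Fin (2 ^ n)) ℂ)
    (hWt : Wt = (Bᴴ ⊗ₖ (1 : Matrix (Fin (2 ^ a) × Fin (2 ^ n)) (Fin (2 ^ a) × Fin (2 ^ n)) ℂ))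
      * W * (B ⊗ₖ (1 : Matrix (Fin (2 ^ a) × Fin (2 ^ n)) (Fin (2 ^ a) × Fin (2 ^ n)) ℂ))) :
    specNorm ((∑ j, ((y j : ℝ) : ℂ) • A j) - (s : ℂ) •
      Matrix.of fun p q : Fin (2 ^ n) =>
        Wt (⟨0, Nat.two_pow_pos b⟩, ⟨0, Nat.two_pow_pos a⟩, p)
           (⟨0, Nat.two_pow_pos b⟩, ⟨0, Nat.two_pow_pos a⟩, q)) ≤ s * ε := by
  classical
  set i0 : Fin (2 ^ b) := ⟨0, Nat.two_pow_pos b⟩ with hi0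
  set a0 : Fin (2 ^ a) := ⟨0, Nat.two_pow_pos a⟩ with ha0
  -- top-left block of each U j
  set M : Fin m → Matrix (Fin (2 ^ n)) (Fin (2 ^ n)) ℂ :=
    fun j => Matrix.of fun p q => U j (a0, p) (a0, q) with hMdef
  -- Entry formula for Wt on the (0,0)-block
  have hWtEntry : ∀ p q : Fin (2 ^ n),
      Wt (i0, a0, p) (i0, a0, q)
        = (∑ j, (starRingEnd ℂ) (B (Fin.castLE hm j) i0) * B (Fin.castLE hm j) i0
              * U j (a0, p) (a0, q))
          + (∑ i, (starRingEnd ℂ) (B i i0) * B i i0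
              - ∑ j, (starRingEnd ℂ) (B (Fin.castLE hm j) i0) * B (Fin.castLE hm j) i0)
            * (if p = q then 1 else 0) := by
    intro p q
    subst hWt hW
    simp only [Matrix.mul_apply, Matrix.kroneckerMap_apply, Matrix.conjTranspose_apply,
      Matrix.add_apply, Matrix.sub_apply, Matrix.sum_apply, Matrix.one_apply,
      Matrix.single, Matrix.of_apply, Fintype.sum_prod_type,
      Prod.mk.injEq, ite_mul, mul_ite, mul_one, mul_zero, zero_mul, one_mul,
      Finset.sum_ite_eq, Finset.sum_ite_eq', Finset.mem_univ, if_true]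
    have hcollapse : ∀ g : Fin m → Fin (2 ^ b) → Fin (2 ^ b) → ℂ,
        (∑ x : Fin (2 ^ b), ∑ x1 : Fin (2 ^ b), ∑ j : Fin m,
          if Fin.castLE hm j = x1 then if Fin.castLE hm j = x then g j x1 x else 0 else 0)
        = ∑ j : Fin m, g j (Fin.castLE hm j) (Fin.castLE hm j) := by
      intro g
      have h1 : (∑ x : Fin (2 ^ b), ∑ x1 : Fin (2 ^ b), ∑ j : Fin m,
            if Fin.castLE hm j = x1 then if Fin.castLE hm j = x then g j x1 x else 0 else 0)
          = ∑ x : Fin (2 ^ b), ∑ j : Fin m, ∑ x1 : Fin (2 ^ b),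
            if Fin.castLE hm j = x1 then if Fin.castLE hm j = x then g j x1 x else 0 else 0 :=
        Finset.sum_congr rfl fun x _ => Finset.sum_comm
      rw [h1, Finset.sum_comm]
      simp [Finset.sum_ite_eq]
    by_cases hpq : p = q
    · subst hpq
      simp only [if_true, true_and, if_pos rfl, ite_and, mul_ite, ite_mul, mul_zero, zero_mul,
        mul_one, one_mul, mul_sub, sub_mul, mul_add, add_mul, Finset.mul_sum, Finset.sum_mul,
        Finset.sum_add_distrib, Finset.sum_sub_distrib,
        Finset.sum_ite_eq, Finset.sum_ite_eq', Finset.mem_univ, if_true]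
      rw [hcollapse, hcollapse]
      simp only [Complex.star_def]
      congr 1
      exact Finset.sum_congr rfl fun j _ => by ring
    · simp only [hpq, if_false, true_and, and_false, false_and, mul_zero, zero_mul, add_zero,
        ite_and, mul_ite, ite_mul, mul_one, one_mul, Finset.mul_sum, Finset.sum_mul]
      rw [hcollapse]
      simp only [Complex.star_def]
      exact Finset.sum_congr rfl fun j _ => by ring
  rcases Nat.eq_zero_or_pos m with hm0 | hm0
  · subst hm0
    simp only [Finset.univ_eq_empty, Finset.sum_empty] at hs ⊢
    subst hs
    simp [specNorm]
  · have hspos : 0 < s := by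
      rw [hs]
      exact Finset.sum_pos (fun j _ => mul_pos (hy j) (hα j))
        ⟨⟨0, hm0⟩, Finset.mem_univ _⟩
    have hval : ∀ j, (starRingEnd ℂ) (B (Fin.castLE hm j) i0) * B (Fin.castLE hm j) i0
        = ((α j * y j / s : ℝ) : ℂ) := by
      intro j
      rw [hB0 j, Complex.conj_ofReal, ← Complex.ofReal_mul,
        Real.mul_self_sqrt (div_nonneg (mul_nonneg (hα j).le (hy j).le) hspos.le)]
    have hresid : (∑ i, (starRingEnd ℂ) (B i i0) * B i i0)
        = ∑ j, (starRingEnd ℂ) (B (Fin.castLE hm j) i0) * B (Fin.castLE hm j) i0 := by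
      rw [← Finset.sum_image (f := fun i => (starRingEnd ℂ) (B i i0) * B i i0)
            (g := Fin.castLE hm)
            (fun x _ y _ h => Fin.castLE_injective hm h)]
      symm
      apply Finset.sum_subset (Finset.subset_univ _)
      intro i _ hi
      have hni : ∀ j : Fin m, Fin.castLE hm j ≠ i := by
        intro j hj
        exact hi (Finset.mem_image.mpr ⟨j, Finset.mem_univ _, hj⟩)
      rw [hB0' i hni, mul_zero]
    have hblock : (Matrix.of fun p q : Fin (2 ^ n) => Wt (i0, a0, p) (i0, a0, q))
        = ∑ j, ((α j * y j / s : ℝ) : ℂ) • M j := by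
      ext p q
      rw [Matrix.of_apply, hWtEntry p q, hresid, sub_self, zero_mul, add_zero]
      simp only [Matrix.sum_apply, Matrix.smul_apply, hval, hMdef, Matrix.of_apply,
        smul_eq_mul]
    have hG : (∑ j, ((y j : ℝ) : ℂ) • A j) - (s : ℂ) •
          (Matrix.of fun p q : Fin (2 ^ n) => Wt (i0, a0, p) (i0, a0, q))
        = ∑ j, ((y j * α j : ℝ) : ℂ) • ((((α j)⁻¹ : ℝ) : ℂ) • A j - M j) := by
      rw [hblock, Finset.smul_sum, ← Finset.sum_sub_distrib]
      refine Finset.sum_congr rfl fun j _ => ?_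
      rw [smul_sub, smul_smul, smul_smul]
      congr 2
      · rw [← Complex.ofReal_mul]
        congr 1
        field_simp
        rw [mul_div_assoc, div_self (hα j).ne', mul_one]
      · rw [← Complex.ofReal_mul]
        congr 1
        field_simp
    rw [hG]
    have key : specNorm (∑ j, ((y j * α j : ℝ) : ℂ) •
          ((((α j)⁻¹ : ℝ) : ℂ) • A j - M j)) ≤ ∑ j, (y j * α j) * ε := by
      unfold specNorm
      rw [map_sum]
      refine le_trans (norm_sum_le _ _) (Finset.sum_le_sum fun j _ => ?_)
      rw [_root_.map_smul]
      rw [norm_smul ((y j * α j : ℝ) : ℂ) (Matrix.toEuclideanCLM (𝕜 := ℂ) ((((α j)⁻¹ : ℝ) : ℂ) • A j - M j))]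
      have h1 : ‖((y j * α j : ℝ) : ℂ)‖ = y j * α j := by
        rw [Complex.norm_real, Real.norm_eq_abs, abs_of_pos (mul_pos (hy j) (hα j))]
      rw [h1]
      exact mul_le_mul_of_nonneg_left (hbe j)
        (le_of_lt (mul_pos (hy j) (hα j)))
    refine key.trans ?_
    rw [← Finset.sum_mul, ← hs]
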